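/- For every y ∈ (0,1) and every x ∈ [0,1], one has x·ln(x/y) + (1−x)·ln((1−x)/(1−y)) ≥ max( |ln((1−y)/y)|, 1 ) · (x−y)², where the terms x·ln(x/y) and (1−x)·ln((1−x)/(1−y)) are interpreted as 0 when x = 0 and x = 1 respectively. -/

import Mathlib

open Real Set


/-- `E(t) = t log t + (1-t) log (1-t)` (negative binary entropy). -/
noncomputable def stmt12E (t : ℝ) : ℝ := t * Real.log t + (1 - t) * Real.log (1 - t)

lemma stmt12E_cont : Continuous stmt12E := by
  unfold stmt12E
  exact (Real.continuous_mul_log).add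
    ((Real.continuous_mul_log).comp (continuous_const.sub continuous_id))

lemma stmt12E_symm (t : ℝ) : stmt12E (1 - t) = stmt12E t := by
  unfold stmt12E
  rw [show (1:ℝ) - (1 - t) = t by ring]
  ring

lemma stmt12E_hasDeriv {x : ℝ} (h0 : 0 < x) (h1 : x < 1) :
    HasDerivAt stmt12E (Real.log x - Real.log (1 - x)) x := by
  have hx1 : (1:ℝ) - x ≠ 0 := by linarith
  have A := Real.hasDerivAt_mul_log (ne_of_gt h0)
  have Binner : HasDerivAt (fun t : ℝ => 1 - t) (-1) x := by
    simpa using (hasDerivAt_id' x).const_sub (1:ℝ)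
  have B0 := Real.hasDerivAt_mul_log hx1
  have B : HasDerivAt (fun t : ℝ => (1 - t) * Real.log (1 - t))
      ((Real.log (1 - x) + 1) * (-1)) x := B0.comp x Binner
  have := A.add B
  exact this.congr_deriv (by ring)

/-- B(x) = D(x‖y) - c (x-y)^2, written with `stmt12E`. -/
noncomputable def stmt12B (y L c x : ℝ) : ℝ :=
  (x - y) * L + stmt12E x - stmt12E y - c * (x - y)^2

noncomputable def stmt12B' (y L c x : ℝ) : ℝ :=
  L + Real.log x - Real.log (1 - x) - 2*c*(x - y)

lemma stmt12B_cont (y L c : ℝ) : Continuous (stmt12B y L c) := by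
  unfold stmt12B
  have h := stmt12E_cont
  fun_prop

lemma stmt12B_hasDeriv (y L c : ℝ) {x : ℝ} (h0 : 0 < x) (h1 : x < 1) :
    HasDerivAt (stmt12B y L c) (stmt12B' y L c x) x := by
  have h1' : HasDerivAt (fun x : ℝ => (x - y) * L) L x := by
    simpa using ((hasDerivAt_id x).sub_const y).mul_const L
  have h2' := stmt12E_hasDeriv h0 h1
  have h3' : HasDerivAt (fun x : ℝ => c * (x - y)^2) (c * (2*(x - y))) x := by
    have := ((hasDerivAt_id x).sub_const y).pow 2
    simpa using (this.const_mul c)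
  have := ((h1'.add h2').sub_const (stmt12E y)).sub h3'
  exact this.congr_deriv (by unfold stmt12B'; ring)

lemma stmt12B'_hasDeriv (y L c : ℝ) {x : ℝ} (h0 : 0 < x) (h1 : x < 1) :
    HasDerivAt (stmt12B' y L c) (1/x + 1/(1 - x) - 2*c) x := by
  have hx1 : (1:ℝ) - x ≠ 0 := by linarith
  have hlog : HasDerivAt Real.log x⁻¹ x := Real.hasDerivAt_log (ne_of_gt h0)
  have Binner : HasDerivAt (fun t : ℝ => 1 - t) (-1) x := by
    simpa using (hasDerivAt_id' x).const_sub (1:ℝ)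
  have hlog2 : HasDerivAt (fun t : ℝ => Real.log (1 - t)) ((1 - x)⁻¹ * (-1)) x :=
    (Real.hasDerivAt_log hx1).comp x Binner
  have hlin : HasDerivAt (fun t : ℝ => 2*c*(t - y)) (2*c) x := by
    simpa using ((hasDerivAt_id x).sub_const y).const_mul (2*c)
  have := (((hasDerivAt_const x L).add hlog).sub hlog2).sub hlin
  exact this.congr_deriv (by ring)

/-- monotone from derivative sign on an open interval -/
lemma stmt12monoIoo {g G : ℝ → ℝ} {p q : ℝ}
    (hd : ∀ x ∈ Ioo p q, HasDerivAt g (G x) x)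
    (hG : ∀ x ∈ Ioo p q, 0 ≤ G x) : MonotoneOn g (Ioo p q) := by
  apply monotoneOn_of_deriv_nonneg (convex_Ioo p q)
  · exact fun x hx => (hd x hx).differentiableAt.continuousAt.continuousWithinAt
  · rw [interior_Ioo]; exact fun x hx => (hd x hx).differentiableAt.differentiableWithinAt
  · rw [interior_Ioo]; intro x hx; rw [(hd x hx).deriv]; exact hG x hx

lemma stmt12antiIoo {g G : ℝ → ℝ} {p q : ℝ}
    (hd : ∀ x ∈ Ioo p q, HasDerivAt g (G x) x)
    (hG : ∀ x ∈ Ioo p q, G x ≤ 0) : AntitoneOn g (Ioo p q) := by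
  apply antitoneOn_of_deriv_nonpos (convex_Ioo p q)
  · exact fun x hx => (hd x hx).differentiableAt.continuousAt.continuousWithinAt
  · rw [interior_Ioo]; exact fun x hx => (hd x hx).differentiableAt.differentiableWithinAt
  · rw [interior_Ioo]; intro x hx; rw [(hd x hx).deriv]; exact hG x hx

lemma stmt12monoIcc {f g : ℝ → ℝ} {p q : ℝ}
    (hf : ContinuousOn f (Icc p q))
    (hd : ∀ x ∈ Ioo p q, HasDerivAt f (g x) x)
    (hG : ∀ x ∈ Ioo p q, 0 ≤ g x) : MonotoneOn f (Icc p q) := by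
  apply monotoneOn_of_deriv_nonneg (convex_Icc p q) hf
  · rw [interior_Icc]; exact fun x hx => (hd x hx).differentiableAt.differentiableWithinAt
  · rw [interior_Icc]; intro x hx; rw [(hd x hx).deriv]; exact hG x hx

lemma stmt12antiIcc {f g : ℝ → ℝ} {p q : ℝ}
    (hf : ContinuousOn f (Icc p q))
    (hd : ∀ x ∈ Ioo p q, HasDerivAt f (g x) x)
    (hG : ∀ x ∈ Ioo p q, g x ≤ 0) : AntitoneOn f (Icc p q) := by
  apply antitoneOn_of_deriv_nonpos (convex_Icc p q) hf
  · rw [interior_Icc]; exact fun x hx => (hd x hx).differentiableAt.differentiableWithinAt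
  · rw [interior_Icc]; intro x hx; rw [(hd x hx).deriv]; exact hG x hx

/-- If `f' = g` on `(p,q)`, `g` is monotone there and vanishes at an interior
point `y₀`, then `f` attains its minimum on `[p,q]` at `y₀`. -/
lemma stmt12auxMin {f g : ℝ → ℝ} {p q y₀ : ℝ} (hpy : p < y₀) (hyq : y₀ < q)
    (hf : ContinuousOn f (Icc p q))
    (hd : ∀ x ∈ Ioo p q, HasDerivAt f (g x) x)
    (hmono : MonotoneOn g (Ioo p q))
    (hg0 : g y₀ = 0) : ∀ x ∈ Icc p q, f y₀ ≤ f x := by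
  have hy₀ : y₀ ∈ Ioo p q := ⟨hpy, hyq⟩
  intro x hx
  rcases le_total x y₀ with h | h
  · have hanti : AntitoneOn f (Icc p y₀) := by
      apply stmt12antiIcc (hf.mono (Icc_subset_Icc_right (le_of_lt hyq)))
      · exact fun z hz => hd z ⟨hz.1, lt_trans hz.2 hyq⟩
      · intro z hz
        have : g z ≤ g y₀ := hmono ⟨hz.1, lt_trans hz.2 hyq⟩ hy₀ (le_of_lt hz.2)
        rw [hg0] at this; exact this
    exact hanti ⟨hx.1, h⟩ ⟨le_of_lt hpy, le_refl _⟩ h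
  · have hmonof : MonotoneOn f (Icc y₀ q) := by
      apply stmt12monoIcc (hf.mono (Icc_subset_Icc_left (le_of_lt hpy)))
      · exact fun z hz => hd z ⟨lt_trans hpy hz.1, hz.2⟩
      · intro z hz
        have : g y₀ ≤ g z := hmono hy₀ ⟨lt_trans hpy hz.1, hz.2⟩ (le_of_lt hz.1)
        rw [hg0] at this; exact this
    exact hmonof ⟨le_refl _, le_of_lt hyq⟩ ⟨h, hx.2⟩ h

/-- If `f' = g` on `(p,q)` and `g` is antitone there (f concave-ish), then the
minimum of `f` on `[p,q]` is attained at an endpoint. -/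
lemma stmt12auxEnd {f g : ℝ → ℝ} {p q : ℝ} (hpq : p < q)
    (hf : ContinuousOn f (Icc p q))
    (hd : ∀ x ∈ Ioo p q, HasDerivAt f (g x) x)
    (hanti : AntitoneOn g (Ioo p q)) :
    ∀ x ∈ Icc p q, min (f p) (f q) ≤ f x := by
  intro x hx
  rcases eq_or_lt_of_le hx.1 with rfl | hpx
  · exact min_le_left _ _
  rcases eq_or_lt_of_le hx.2 with rfl | hxq
  · exact min_le_right _ _
  have hxI : x ∈ Ioo p q := ⟨hpx, hxq⟩
  rcases le_total 0 (g x) with h | h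
  · have hmonof : MonotoneOn f (Icc p x) := by
      apply stmt12monoIcc (hf.mono (Icc_subset_Icc_right (le_of_lt hxq)))
      · exact fun z hz => hd z ⟨hz.1, lt_trans hz.2 hxq⟩
      · intro z hz
        exact le_trans h (hanti ⟨hz.1, lt_trans hz.2 hxq⟩ hxI (le_of_lt hz.2))
    exact le_trans (min_le_left _ _)
      (hmonof ⟨le_refl _, le_of_lt hpx⟩ ⟨le_of_lt hpx, le_refl _⟩ (le_of_lt hpx))
  · have hantif : AntitoneOn f (Icc x q) := by
      apply stmt12antiIcc (hf.mono (Icc_subset_Icc_left (le_of_lt hpx)))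
      · exact fun z hz => hd z ⟨lt_trans hpx hz.1, hz.2⟩
      · intro z hz
        exact le_trans (hanti hxI ⟨lt_trans hpx hz.1, hz.2⟩ (le_of_lt hz.1)) h
    exact le_trans (min_le_right _ _)
      (hantif ⟨le_refl _, le_of_lt hxq⟩ ⟨le_of_lt hxq, le_refl _⟩ (le_of_lt hxq))

set_option maxHeartbeats 2000000 in
/-- Main estimate for `y ≤ 1/2`. -/
lemma stmt12key (y x : ℝ) (hy0 : 0 < y) (hy2 : y ≤ 1/2) (hx0 : 0 ≤ x) (hx1 : x ≤ 1) :
    max |Real.log ((1 - y)/y)| 1 * (x - y)^2 ≤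
      (x - y) * Real.log ((1 - y)/y) + stmt12E x - stmt12E y := by
  have hy1 : y < 1 := by linarith
  set L : ℝ := Real.log ((1 - y)/y) with hLdef
  have hL : L = Real.log (1 - y) - Real.log y := Real.log_div (by linarith) (ne_of_gt hy0)
  have hL0 : 0 ≤ L := by
    apply Real.log_nonneg
    rw [le_div_iff₀ hy0]; linarith
  have habs : |L| = L := abs_of_nonneg hL0
  rw [habs]
  set c : ℝ := max L 1 with hcdef
  have hc1 : (1:ℝ) ≤ c := le_max_right _ _
  have hcL : L ≤ c := le_max_left _ _
  have hc0 : 0 < c := by linarith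
  suffices h : 0 ≤ stmt12B y L c x by
    unfold stmt12B at h; linarith
  -- basic facts
  clear_value L
  have hBy : stmt12B y L c y = 0 := by unfold stmt12B; ring
  have hB'y : stmt12B' y L c y = 0 := by unfold stmt12B'; rw [hL]; ring
  -- 2 L y < 1
  have h2Ly : 2*L*y < 1 := by
    have he1 : (0:ℝ) < Real.exp 1 := Real.exp_pos 1
    have hey : 0 < Real.exp 1 * y := by positivity
    have hlog1 : Real.log (1/(Real.exp 1 * y)) ≤ 1/(Real.exp 1 * y) - 1 :=
      Real.log_le_sub_one_of_pos (by positivity)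
    have hlog2 : Real.log (1/(Real.exp 1 * y)) = -1 - Real.log y := by
      rw [one_div, Real.log_inv, Real.log_mul (ne_of_gt he1) (ne_of_gt hy0), Real.log_exp]
      ring
    have hny : -Real.log y ≤ 1/(Real.exp 1 * y) := by rw [hlog2] at hlog1; linarith
    have hyny : y * (-Real.log y) ≤ 1/Real.exp 1 := by
      have := mul_le_mul_of_nonneg_left hny (le_of_lt hy0)
      calc y * (-Real.log y) ≤ y * (1/(Real.exp 1 * y)) := this
        _ = 1/Real.exp 1 := by field_simp
    have hLle : L ≤ -Real.log y := by
      have : Real.log (1 - y) ≤ 0 := Real.log_nonpos (by linarith) (by linarith)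
      rw [hL]; linarith
    have hyL : y * L ≤ 1/Real.exp 1 := by
      have := mul_le_mul_of_nonneg_left hLle (le_of_lt hy0)
      linarith
    have hegt2 : (2:ℝ) < Real.exp 1 := by
      have := Real.exp_one_gt_d9; norm_num at this ⊢; linarith
    have : 1/Real.exp 1 < 1/2 := by
      rw [div_lt_div_iff₀ he1 (by norm_num)]; linarith
    nlinarith
  -- case split on L ≤ 2
  rcases le_total L 2 with hL2 | hL2
  · -- global convexity
    have hc2 : c ≤ 2 := max_le hL2 (by norm_num)
    have hmono : MonotoneOn (stmt12B' y L c) (Ioo (0:ℝ) 1) := by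
      apply stmt12monoIoo (fun z hz => stmt12B'_hasDeriv y L c hz.1 hz.2)
      intro z hz
      have hz0 := hz.1; have hz1 := hz.2
      have h4 : 4 ≤ 1/z + 1/(1 - z) := by
        rw [div_add_div _ _ (ne_of_gt hz0) (by linarith : (1:ℝ) - z ≠ 0)]
        rw [le_div_iff₀ (by nlinarith)]
        nlinarith [sq_nonneg (2*z - 1)]
      linarith
    have := stmt12auxMin hy0 hy1 (stmt12B_cont y L c).continuousOn
      (fun z hz => stmt12B_hasDeriv y L c hz.1 hz.2) hmono hB'y x ⟨hx0, hx1⟩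
    rw [hBy] at this; exact this
  · -- L ≥ 2
    have hcL' : c = L := max_eq_left (by linarith)
    rw [hcL'] at hBy hB'y ⊢
    have hLpos : 0 < L := by linarith
    set s : ℝ := Real.sqrt (1 - 2/L) with hsdef
    have harg : 0 ≤ 1 - 2/L := by
      have : 2/L ≤ 1 := by rw [div_le_one hLpos]; linarith
      linarith
    have hs2 : s^2 = 1 - 2/L := Real.sq_sqrt harg
    have hs0 : 0 ≤ s := Real.sqrt_nonneg _
    have h2L : 0 < 2/L := by positivity
    have hs1 : s < 1 := by nlinarith
    set a : ℝ := (1 - s)/2 with hadef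
    set b : ℝ := (1 + s)/2 with hbdef
    have hab1 : a + b = 1 := by rw [hadef, hbdef]; ring
    have habp : 2*L*(a*b) = 1 := by
      have h1s : 1 - s^2 = 2/L := by rw [hs2]; ring
      calc 2*L*(a*b) = L*(1 - s^2)/2 := by rw [hadef, hbdef]; ring
        _ = L*(2/L)/2 := by rw [h1s]
        _ = 1 := by field_simp
    have hahalf : a ≤ 1/2 := by rw [hadef]; linarith
    have hbhalf : 1/2 ≤ b := by rw [hbdef]; linarith
    have hb1 : b < 1 := by rw [hbdef]; linarith
    have hab : a ≤ b := by rw [hadef, hbdef]; linarith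
    clear_value s a b
    have hb0 : 0 < b := by linarith
    have hya : y < a := by
      -- y < 1/(2L) ≤ a
      have hble : b ≤ 1 := le_of_lt hb1
      have hab0 : 0 < a * b := by nlinarith [habp, hLpos]
      have ha0' : 0 < a := by nlinarith [hab0, hb0]
      have h2La : 1 ≤ 2*L*a := by nlinarith [mul_nonneg (mul_nonneg (le_of_lt hLpos) (le_of_lt ha0')) (sub_nonneg.2 hble)]
      nlinarith [hLpos, h2Ly, h2La]
    have ha0 : 0 < a := lt_trans hy0 hya
    have ha1 : a < 1 := by linarith
    -- Region 1 : B ≥ 0 on [0, a]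
    have hreg1 : ∀ z ∈ Icc (0:ℝ) a, 0 ≤ stmt12B y L L z := by
      have hmono : MonotoneOn (stmt12B' y L L) (Ioo (0:ℝ) a) := by
        apply stmt12monoIoo (fun z hz => stmt12B'_hasDeriv y L L hz.1 (lt_trans hz.2 ha1))
        intro z hz
        have hz0 := hz.1; have hza := hz.2
        have hz1 : z < 1 := lt_trans hza ha1
        have hkey : 2*L*(z*(1 - z)) ≤ 1 := by
          have hfac : 0 ≤ (a - z)*(b - z) := by nlinarith
          have hid : 2*L*(z*(1 - z)) = 1 - 2*L*((a - z)*(b - z)) := by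
            linear_combination habp - 2*L*z*hab1
          have := mul_nonneg (le_of_lt hLpos) hfac
          linarith
        have : 2*L ≤ 1/z + 1/(1 - z) := by
          rw [div_add_div _ _ (ne_of_gt hz0) (by linarith : (1:ℝ) - z ≠ 0)]
          rw [le_div_iff₀ (by nlinarith)]
          nlinarith
        linarith
      intro z hz
      have := stmt12auxMin hy0 hya (stmt12B_cont y L L).continuousOn
        (fun w hw => stmt12B_hasDeriv y L L hw.1 (lt_trans hw.2 ha1)) hmono hB'y z hz
      rw [hBy] at this; exact this
    -- Region 3 : B ≥ 2Ly(2z-1) ≥ 0 on [b, 1]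
    have hreg3 : ∀ z ∈ Icc b 1, 0 ≤ stmt12B y L L z := by
      have hby : b < 1 - y := by linarith
      have h1y1 : 1 - y < 1 := by linarith
      set f3 : ℝ → ℝ := fun z => stmt12B y L L z - 2*L*y*(2*z - 1) with hf3
      set g3 : ℝ → ℝ := fun z => stmt12B' y L L z - 4*L*y with hg3
      have hf3d : ∀ z ∈ Ioo b 1, HasDerivAt f3 (g3 z) z := by
        intro z hz
        have h1 := stmt12B_hasDeriv y L L (lt_trans hb0 hz.1) hz.2
        have h2 : HasDerivAt (fun z : ℝ => 2*L*y*(2*z - 1)) (2*L*y*2) z := by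
          simpa using (((hasDerivAt_id z).const_mul (2:ℝ)).sub_const 1).const_mul (2*L*y)
        have := h1.sub h2
        exact this.congr_deriv (by rw [hg3]; ring)
      have hmono3 : MonotoneOn g3 (Ioo b 1) := by
        apply stmt12monoIoo (G := fun z => 1/z + 1/(1 - z) - 2*L)
        · intro z hz
          exact (stmt12B'_hasDeriv y L L (lt_trans hb0 hz.1) hz.2).sub_const (4*L*y)
        · intro z hz
          have hzb := hz.1; have hz1 := hz.2
          have hz0 : 0 < z := lt_trans hb0 hzb
          have hkey : 2*L*(z*(1 - z)) ≤ 1 := by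
            have hfac : 0 ≤ (z - a)*(z - b) := by nlinarith
            have hid : 2*L*(z*(1 - z)) = 1 - 2*L*((z - a)*(z - b)) := by
              linear_combination habp - 2*L*z*hab1
            have := mul_nonneg (le_of_lt hLpos) hfac
            linarith
          have : 2*L ≤ 1/z + 1/(1 - z) := by
            rw [div_add_div _ _ (ne_of_gt hz0) (by linarith : (1:ℝ) - z ≠ 0)]
            rw [le_div_iff₀ (by nlinarith)]
            nlinarith
          linarith
      have hg30 : g3 (1 - y) = 0 := by
        rw [hg3]; simp only
        unfold stmt12B'
        rw [show (1:ℝ) - (1 - y) = y by ring, hL]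
        ring
      have hf30 : f3 (1 - y) = 0 := by
        rw [hf3]; simp only
        unfold stmt12B
        rw [stmt12E_symm]
        ring
      have hcont3 : ContinuousOn f3 (Icc b 1) := by
        rw [hf3]
        apply ((stmt12B_cont y L L).sub (by fun_prop)).continuousOn
      have := stmt12auxMin hby h1y1 hcont3 hf3d hmono3 hg30
      intro z hz
      have h5 := this z hz
      rw [hf30] at h5
      have h6 : 2*L*y*(2*z - 1) ≤ stmt12B y L L z := by
        rw [hf3] at h5; simp only at h5; linarith
      have h7 : 0 ≤ 2*L*y*(2*z - 1) := by
        have : (1:ℝ)/2 ≤ z := le_trans hbhalf hz.1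
        have : 0 ≤ 2*z - 1 := by linarith
        positivity
      linarith
    -- combine
    rcases le_total x a with hxa | hxa
    · exact hreg1 x ⟨hx0, hxa⟩
    rcases le_total b x with hbx | hbx
    · exact hreg3 x ⟨hbx, hx1⟩
    -- middle region [a, b]
    rcases eq_or_lt_of_le hab with heq | hab'
    · -- a = b : x = a
      have hxa' : x = a := le_antisymm (by rw [heq]; exact hbx) hxa
      exact hreg1 x ⟨hx0, le_of_eq hxa'⟩
    have hanti : AntitoneOn (stmt12B' y L L) (Ioo a b) := by
      apply stmt12antiIoo (G := fun z => 1/z + 1/(1 - z) - 2*L)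
      · intro z hz
        exact stmt12B'_hasDeriv y L L (lt_trans ha0 hz.1) (lt_trans hz.2 hb1)
      · intro z hz
        have hza := hz.1; have hzb := hz.2
        have hz0 : 0 < z := lt_trans ha0 hza
        have hz1 : z < 1 := lt_trans hzb hb1
        have hkey : 1 ≤ 2*L*(z*(1 - z)) := by
          have hfac : 0 ≤ (z - a)*(b - z) := by nlinarith
          have hid : 2*L*(z*(1 - z)) = 1 + 2*L*((z - a)*(b - z)) := by
            linear_combination habp - 2*L*z*hab1
          have := mul_nonneg (le_of_lt hLpos) hfac
          linarith
        have : 1/z + 1/(1 - z) ≤ 2*L := by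
          rw [div_add_div _ _ (ne_of_gt hz0) (by linarith : (1:ℝ) - z ≠ 0)]
          rw [div_le_iff₀ (by nlinarith)]
          nlinarith
        linarith
    have hend := stmt12auxEnd hab' (stmt12B_cont y L L).continuousOn
      (fun z hz => stmt12B_hasDeriv y L L (lt_trans ha0 hz.1) (lt_trans hz.2 hb1))
      hanti x ⟨hxa, hbx⟩
    have hBa : 0 ≤ stmt12B y L L a := hreg1 a ⟨le_of_lt ha0, le_refl _⟩
    have hBb : 0 ≤ stmt12B y L L b := hreg3 b ⟨le_refl _, le_of_lt hb1⟩
    calc (0:ℝ) ≤ min (stmt12B y L L a) (stmt12B y L L b) := le_min hBa hBb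
      _ ≤ stmt12B y L L x := hend

lemma stmt12Dform (y x : ℝ) (hy0 : 0 < y) (hy1 : y < 1) (hx0 : 0 ≤ x) (hx1 : x ≤ 1) :
    x * Real.log (x / y) + (1 - x) * Real.log ((1 - x) / (1 - y)) =
      (x - y) * Real.log ((1 - y)/y) + stmt12E x - stmt12E y := by
  have h1 : x * Real.log (x / y) = x * Real.log x - x * Real.log y := by
    rcases eq_or_lt_of_le hx0 with rfl | hx
    · simp
    · rw [Real.log_div (ne_of_gt hx) (ne_of_gt hy0)]; ring
  have h2 : (1 - x) * Real.log ((1 - x) / (1 - y)) =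
      (1 - x) * Real.log (1 - x) - (1 - x) * Real.log (1 - y) := by
    rcases eq_or_lt_of_le hx1 with rfl | hx
    · simp
    · rw [Real.log_div (by linarith : (1:ℝ) - x ≠ 0) (by linarith : (1:ℝ) - y ≠ 0)]; ring
  rw [h1, h2, Real.log_div (by linarith : (1:ℝ) - y ≠ 0) (ne_of_gt hy0)]
  unfold stmt12E
  ring


/-- Quadratic lower bound for the binary (Fermi–Dirac)
relative entropy: for `y ∈ (0,1)` and `x ∈ [0,1]`,
`x ln(x/y) + (1−x) ln((1−x)/(1−y)) ≥ max(|ln((1−y)/y)|, 1) (x−y)²`.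
(The terms `x ln(x/y)` and `(1−x) ln((1−x)/(1−y))` vanish for `x = 0` and
`x = 1` respectively; in Lean this holds automatically since they carry the
factors `x` and `1 − x`.) -/
theorem stmt12 (y : ℝ) (hy0 : 0 < y) (hy1 : y < 1)
    (x : ℝ) (hx0 : 0 ≤ x) (hx1 : x ≤ 1) :
    x * Real.log (x / y) + (1 - x) * Real.log ((1 - x) / (1 - y)) ≥
      max |Real.log ((1 - y) / y)| 1 * (x - y) ^ 2 := by
  rw [ge_iff_le, stmt12Dform y x hy0 hy1 hx0 hx1]
  rcases le_total y (1/2) with hy2 | hy2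
  · exact stmt12key y x hy0 hy2 hx0 hx1
  · have h := stmt12key (1 - y) (1 - x) (by linarith) (by linarith) (by linarith) (by linarith)
    rw [show (1:ℝ) - (1 - y) = y by ring] at h
    rw [stmt12E_symm, stmt12E_symm] at h
    have hlog : Real.log (y / (1 - y)) = -Real.log ((1 - y)/y) := by
      rw [show y / (1 - y) = ((1 - y)/y)⁻¹ by rw [inv_div], Real.log_inv]
    rw [hlog] at h
    rw [abs_neg] at h
    calc max |Real.log ((1 - y)/y)| 1 * (x - y)^2
        = max |Real.log ((1 - y)/y)| 1 * ((1 - x) - (1 - y))^2 := by ring_nf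
      _ ≤ ((1 - x) - (1 - y)) * -Real.log ((1 - y)/y) + stmt12E x - stmt12E y := h
      _ = (x - y) * Real.log ((1 - y)/y) + stmt12E x - stmt12E y := by ring
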